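/- Define d : ℕ → ℚ by d(0) = 0, d(1) = 1, d(2N) = d(N), d(2N+1) = (d(N) + d(N+1) + 1)/2. For every nonnegative integer N, (1/2)·|N|_{01} ≤ d(N) ≤ 2·|N|_{01}, where |N|_{01} denotes the number of (possibly overlapping) occurrences of the block '01' in the binary expansion of N read with a leading zero (equivalently, the number of maximal blocks of consecutive 1s in the binary expansion of N). -/

import Mathlib

set_option linter.unusedTactic false

/-- The number of occurrences of the block `01` in the binary expansion of `N`
(read with a leading zero), i.e. the number of maximal blocks of consecutive 1s. -/
def blockCount (N : ℕ) : ℕ :=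
  ((Finset.range (N + 1)).filter fun i => N.testBit i ∧ ¬ N.testBit (i + 1)).card

lemma testBit_lt {n i : ℕ} (h : n.testBit i = true) : i < n := by
  have h1 := Nat.ge_two_pow_of_testBit h
  have h2 := Nat.lt_two_pow_self (n := i)
  omega
  
lemma blockCount_congr (N K : ℕ) (h : N < K) :
    blockCount N = ((Finset.range K).filter fun i => N.testBit i ∧ ¬ N.testBit (i + 1)).card := by
  unfold blockCount
  congr 1
  ext i
  simp only [Finset.mem_filter, Finset.mem_range]
  constructor
  · rintro ⟨hi, h2⟩; exact ⟨by omega, h2⟩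
  · rintro ⟨hi, h2, h3⟩
    refine ⟨?_, h2, h3⟩
    have := testBit_lt h2
    omega


def succEmb : ℕ ↪ ℕ := ⟨Nat.succ, Nat.succ_injective⟩

lemma blockCount_two_mul (N : ℕ) : blockCount (2 * N) = blockCount N := by
  have hdiv : 2 * N / 2 = N := by omega
  have htb : ∀ i, (2 * N).testBit (i + 1) = N.testBit i := fun i => by
    rw [Nat.testBit_succ, hdiv]
  have htb0 : (2 * N).testBit 0 = false := by
    simp [Nat.testBit_zero, Nat.mul_mod_right]
  rcases Nat.eq_zero_or_pos N with rfl | hN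
  · decide
  rw [blockCount_congr N (2 * N) (by omega)]
  have hset : ((Finset.range (2 * N + 1)).filter
        fun i => (2 * N).testBit i ∧ ¬ (2 * N).testBit (i + 1))
      = Finset.map succEmb
          ((Finset.range (2 * N)).filter fun i => N.testBit i ∧ ¬ N.testBit (i + 1)) := by
    ext j
    simp only [Finset.mem_filter, Finset.mem_range, Finset.mem_map, succEmb,
      Function.Embedding.coeFn_mk]
    constructor
    · rintro ⟨hj, h1, h2⟩
      match j with
      | 0 => rw [htb0] at h1; exact absurd h1 (by simp)
      | i + 1 =>
        rw [htb] at h1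
        rw [htb] at h2
        exact ⟨i, ⟨by omega, h1, h2⟩, rfl⟩
    · rintro ⟨i, ⟨hi, h1, h2⟩, rfl⟩
      rw [Nat.succ_eq_add_one, htb, htb]
      exact ⟨by omega, h1, h2⟩
  unfold blockCount
  rw [hset, Finset.card_map]

lemma blockCount_odd (N : ℕ) :
    blockCount (2 * N + 1) = blockCount N + (if N % 2 = 0 then 1 else 0) := by
  have hdiv : (2 * N + 1) / 2 = N := by omega
  have htb : ∀ i, (2 * N + 1).testBit (i + 1) = N.testBit i := fun i => by
    rw [Nat.testBit_succ, hdiv]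
  have htb0 : (2 * N + 1).testBit 0 = true := by
    simp [Nat.testBit_zero, Nat.mul_add_mod]
  have htbN0 : N.testBit 0 = decide (N % 2 = 1) := Nat.testBit_zero N
  rw [blockCount_congr N (2 * N + 1) (by omega)]
  by_cases hpar : N % 2 = 0
  · have hset : ((Finset.range (2 * N + 1 + 1)).filter
          fun i => (2 * N + 1).testBit i ∧ ¬ (2 * N + 1).testBit (i + 1))
        = insert 0 (Finset.map succEmb
            ((Finset.range (2 * N + 1)).filter fun i => N.testBit i ∧ ¬ N.testBit (i + 1))) := by
      ext j
      simp only [Finset.mem_filter, Finset.mem_range, Finset.mem_insert, Finset.mem_map, succEmb,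
        Function.Embedding.coeFn_mk]
      constructor
      · rintro ⟨hj, h1, h2⟩
        match j with
        | 0 => exact Or.inl rfl
        | i + 1 =>
          rw [htb] at h1
          rw [htb] at h2
          exact Or.inr ⟨i, ⟨by omega, h1, h2⟩, rfl⟩
      · rintro (rfl | ⟨i, ⟨hi, h1, h2⟩, rfl⟩)
        · refine ⟨by omega, htb0, ?_⟩
          rw [htb, htbN0]
          simp only [decide_eq_true_eq]
          omega
        · rw [Nat.succ_eq_add_one, htb, htb]
          exact ⟨by omega, h1, h2⟩
    unfold blockCount
    rw [hset, Finset.card_insert_of_notMem (by simp [succEmb]), Finset.card_map, if_pos hpar]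
  · have hset : ((Finset.range (2 * N + 1 + 1)).filter
          fun i => (2 * N + 1).testBit i ∧ ¬ (2 * N + 1).testBit (i + 1))
        = Finset.map succEmb
            ((Finset.range (2 * N + 1)).filter fun i => N.testBit i ∧ ¬ N.testBit (i + 1)) := by
      ext j
      simp only [Finset.mem_filter, Finset.mem_range, Finset.mem_map, succEmb,
        Function.Embedding.coeFn_mk]
      constructor
      · rintro ⟨hj, h1, h2⟩
        match j with
        | 0 =>
          exfalso
          rw [htb, htbN0] at h2
          simp only [decide_eq_true_eq] at h2
          omega
        | i + 1 =>
          rw [htb] at h1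
          rw [htb] at h2
          exact ⟨i, ⟨by omega, h1, h2⟩, rfl⟩
      · rintro ⟨i, ⟨hi, h1, h2⟩, rfl⟩
        rw [Nat.succ_eq_add_one, htb, htb]
        exact ⟨by omega, h1, h2⟩
    unfold blockCount
    rw [hset, Finset.card_map, if_neg hpar]
    omega

lemma key (d : ℕ → ℚ) (h0 : d 0 = 0) (h1 : d 1 = 1)
    (heven : ∀ N : ℕ, d (2 * N) = d N)
    (hodd : ∀ N : ℕ, d (2 * N + 1) = (d N + d (N + 1) + 1) / 2) :
    ∀ N : ℕ,
      ((blockCount N : ℚ) ≤ 2 * d N) ∧ ((blockCount (N + 1) : ℚ) ≤ 2 * d (N + 1)) ∧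
      ((N % 2 = 0 ∧ blockCount (N + 1) = blockCount N + 1 ∧
          d N ≤ 2 * (blockCount N : ℚ) ∧ d (N + 1) + 1 ≤ 2 * (blockCount (N + 1) : ℚ)) ∨
       (N % 2 = 0 ∧ blockCount (N + 1) = blockCount N ∧
          d N < 2 * (blockCount N : ℚ) ∧ d (N + 1) < 2 * (blockCount (N + 1) : ℚ)) ∨
       (N % 2 = 1 ∧ blockCount (N + 1) = blockCount N ∧
          d N < 2 * (blockCount N : ℚ) ∧ d (N + 1) + 1 ≤ 2 * (blockCount (N + 1) : ℚ)) ∨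
       (N % 2 = 1 ∧ blockCount (N + 1) + 1 = blockCount N ∧
          d N < 2 * (blockCount N : ℚ) ∧ d (N + 1) < 2 * (blockCount (N + 1) : ℚ))) := by
  intro N
  induction N using Nat.strong_induction_on with
  | _ N ih =>
  rcases Nat.even_or_odd' N with ⟨M, rfl | rfl⟩
  · -- N = 2M
    rcases Nat.eq_zero_or_pos M with rfl | hM
    · -- base case N = 0
      have hb0 : blockCount 0 = 0 := by decide
      have hb1 : blockCount 1 = 1 := by decide
      have hd2 : d 2 = d 1 := by have h := heven 1; norm_num at h; exact h
      norm_num [hb0, hb1, h0, h1, hd2]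
    obtain ⟨L1, L2, hcls⟩ := ih M (by omega)
    have e2 : d (2 * M) = d M := heven M
    have e2' : d (2 * M + 1) = (d M + d (M + 1) + 1) / 2 := hodd M
    have hb2 : blockCount (2 * M) = blockCount M := blockCount_two_mul M
    have hb2' := blockCount_odd M
    rcases hcls with ⟨hp, hb, hu, hv⟩ | ⟨hp, hb, hu, hv⟩ | ⟨hp, hb, hu, hv⟩ | ⟨hp, hb, hu, hv⟩
    -- branch E1 : M even, b(M+1) = bM + 1 ; child 2M in E1
    · have hbo : blockCount (2 * M + 1) = blockCount M + 1 := by rw [hb2']; simp [hp]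
      have hbq : ((blockCount (M + 1) : ℚ)) = (blockCount M : ℚ) + 1 := by exact_mod_cast hb
      refine ⟨?_, ?_, Or.inl ⟨by omega, by omega, ?_, ?_⟩⟩
      · rw [hb2, e2]; exact L1
      · rw [hbo, e2']; push_cast; linarith
      · rw [hb2, e2]; exact hu
      · rw [hbo, e2']; push_cast; linarith
    -- branch E0 : M even, b(M+1) = bM ; child 2M in E1
    · have hbo : blockCount (2 * M + 1) = blockCount M + 1 := by rw [hb2']; simp [hp]
      have hbq : ((blockCount (M + 1) : ℚ)) = (blockCount M : ℚ) := by exact_mod_cast hb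
      refine ⟨?_, ?_, Or.inl ⟨by omega, by omega, ?_, ?_⟩⟩
      · rw [hb2, e2]; exact L1
      · rw [hbo, e2']; push_cast; linarith
      · rw [hb2, e2]; linarith
      · rw [hbo, e2']; push_cast; linarith
    -- branch O0 : M odd, b(M+1) = bM ; child 2M in E0
    · have hbo : blockCount (2 * M + 1) = blockCount M := by rw [hb2']; simp [hp]
      have hbq : ((blockCount (M + 1) : ℚ)) = (blockCount M : ℚ) := by exact_mod_cast hb
      refine ⟨?_, ?_, Or.inr (Or.inl ⟨by omega, by omega, ?_, ?_⟩)⟩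
      · rw [hb2, e2]; exact L1
      · rw [hbo, e2']; push_cast; linarith
      · rw [hb2, e2]; exact hu
      · rw [hbo, e2']; push_cast; linarith
    -- branch O-1 : M odd, b(M+1) + 1 = bM ; child 2M in E0
    · have hbo : blockCount (2 * M + 1) = blockCount M := by rw [hb2']; simp [hp]
      have hbq : ((blockCount (M + 1) : ℚ)) + 1 = (blockCount M : ℚ) := by exact_mod_cast hb
      refine ⟨?_, ?_, Or.inr (Or.inl ⟨by omega, by omega, ?_, ?_⟩)⟩
      · rw [hb2, e2]; exact L1
      · rw [hbo, e2']; push_cast; linarith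
      · rw [hb2, e2]; exact hu
      · rw [hbo, e2']; push_cast; linarith
  · -- N = 2M + 1
    obtain ⟨L1, L2, hcls⟩ := ih M (by omega)
    have e2' : d (2 * M + 1) = (d M + d (M + 1) + 1) / 2 := hodd M
    have e2'' : d (2 * M + 1 + 1) = d (M + 1) := by
      rw [show 2 * M + 1 + 1 = 2 * (M + 1) by ring]; exact heven (M + 1)
    have hb2'' : blockCount (2 * M + 1 + 1) = blockCount (M + 1) := by
      rw [show 2 * M + 1 + 1 = 2 * (M + 1) by ring]; exact blockCount_two_mul (M + 1)
    have hb2' := blockCount_odd M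
    rcases hcls with ⟨hp, hb, hu, hv⟩ | ⟨hp, hb, hu, hv⟩ | ⟨hp, hb, hu, hv⟩ | ⟨hp, hb, hu, hv⟩
    -- branch E1 : child 2M+1 in O0
    · have hbo : blockCount (2 * M + 1) = blockCount M + 1 := by rw [hb2']; simp [hp]
      have hbq : ((blockCount (M + 1) : ℚ)) = (blockCount M : ℚ) + 1 := by exact_mod_cast hb
      refine ⟨?_, ?_, Or.inr (Or.inr (Or.inl ⟨by omega, by omega, ?_, ?_⟩))⟩
      · rw [hbo, e2']; push_cast; linarith
      · rw [hb2'', e2'']; exact L2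
      · rw [hbo, e2']; push_cast; linarith
      · rw [hb2'', e2'']; linarith
    -- branch E0 : child 2M+1 in O-1
    · have hbo : blockCount (2 * M + 1) = blockCount M + 1 := by rw [hb2']; simp [hp]
      have hbq : ((blockCount (M + 1) : ℚ)) = (blockCount M : ℚ) := by exact_mod_cast hb
      refine ⟨?_, ?_, Or.inr (Or.inr (Or.inr ⟨by omega, by omega, ?_, ?_⟩))⟩
      · rw [hbo, e2']; push_cast; linarith
      · rw [hb2'', e2'']; exact L2
      · rw [hbo, e2']; push_cast; linarith
      · rw [hb2'', e2'']; linarith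
    -- branch O0 : child 2M+1 in O0
    · have hbo : blockCount (2 * M + 1) = blockCount M := by rw [hb2']; simp [hp]
      have hbq : ((blockCount (M + 1) : ℚ)) = (blockCount M : ℚ) := by exact_mod_cast hb
      refine ⟨?_, ?_, Or.inr (Or.inr (Or.inl ⟨by omega, by omega, ?_, ?_⟩))⟩
      · rw [hbo, e2']; push_cast; linarith
      · rw [hb2'', e2'']; exact L2
      · rw [hbo, e2']; push_cast; linarith
      · rw [hb2'', e2'']; linarith
    -- branch O-1 : child 2M+1 in O-1
    · have hbo : blockCount (2 * M + 1) = blockCount M := by rw [hb2']; simp [hp]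
      have hbq : ((blockCount (M + 1) : ℚ)) + 1 = (blockCount M : ℚ) := by exact_mod_cast hb
      refine ⟨?_, ?_, Or.inr (Or.inr (Or.inr ⟨by omega, by omega, ?_, ?_⟩))⟩
      · rw [hbo, e2']; push_cast; linarith
      · rw [hb2'', e2'']; exact L2
      · rw [hbo, e2']; push_cast; linarith
      · rw [hb2'', e2'']; linarith

theorem discrepancy_blockCount_bounds (d : ℕ → ℚ)
    (h0 : d 0 = 0) (h1 : d 1 = 1)
    (heven : ∀ N : ℕ, d (2 * N) = d N)
    (hodd : ∀ N : ℕ, d (2 * N + 1) = (d N + d (N + 1) + 1) / 2)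
    (N : ℕ) :
    (blockCount N : ℚ) / 2 ≤ d N ∧ d N ≤ 2 * (blockCount N : ℚ) := by
  obtain ⟨L1, _, hcls⟩ := key d h0 h1 heven hodd N
  constructor
  · linarith
  · rcases hcls with ⟨_, _, hu, _⟩ | ⟨_, _, hu, _⟩ | ⟨_, _, hu, _⟩ | ⟨_, _, hu, _⟩ <;> linarith
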